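/- Let V ∈ ℝ^{n×2} have rows in general position. As c ranges over all unit vectors in ℝ^2, the number of distinct index sets I_k(Vc) (the support of the top-k absolute entries of Vc, when the top k are uniquely determined) is at most 4·binom(n,2) + 2. -/

import Mathlib

open Matrix BigOperators

section SpannogramAux

open Real

/-- Counting lemma: if strictly between any two elements of `tf` there is an
element of `zf`, then `tf.card ≤ zf.card + 1`. -/
private lemma count_between (tf zf : Finset ℝ)
    (h : ∀ a ∈ tf, ∀ b ∈ tf, a < b → ∃ z ∈ zf, a < z ∧ z < b) :
    tf.card ≤ zf.card + 1 := by
  classical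
  have hle : tf.card ≤ (insert (⊥ : WithBot ℝ) (zf.image ((↑) : ℝ → WithBot ℝ))).card := by
    apply Finset.card_le_card_of_injOn (fun t => (zf.filter (· < t)).max)
    · intro a _
      beta_reduce
      rcases hm : (zf.filter (· < a)).max with _ | m
      · exact Finset.mem_insert_self _ _
      · refine Finset.mem_insert_of_mem ?_
        exact Finset.mem_image_of_mem _ (Finset.mem_filter.1 (Finset.mem_of_max hm)).1
    · have key : ∀ a ∈ (tf : Set ℝ), ∀ b ∈ (tf : Set ℝ), a < b →
          (zf.filter (· < a)).max ≠ (zf.filter (· < b)).max := by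
        intro a ha b hb hlt heq
        obtain ⟨z, hz, haz, hzb⟩ := h a ha b hb hlt
        have h1 : (z : WithBot ℝ) ≤ (zf.filter (· < b)).max :=
          Finset.le_max (Finset.mem_filter.2 ⟨hz, hzb⟩)
        have h2 : (zf.filter (· < a)).max < (z : WithBot ℝ) := by
          rcases hm : (zf.filter (· < a)).max with _ | m
          · exact WithBot.bot_lt_coe z
          · have hma : m < a := by
              simpa using (Finset.mem_filter.1 (Finset.mem_of_max hm)).2
            exact WithBot.coe_lt_coe.2 (lt_trans hma haz)
        rw [heq] at h2
        exact absurd (lt_of_lt_of_le h2 h1) (lt_irrefl _)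
      intro a ha b hb hab
      by_contra hne
      rcases lt_or_gt_of_ne hne with hlt | hlt
      · exact key a ha b hb hlt hab
      · exact key b hb a ha hlt hab.symm
  calc tf.card ≤ _ := hle
    _ ≤ (zf.image ((↑) : ℝ → WithBot ℝ)).card + 1 := Finset.card_insert_le _ _
    _ ≤ zf.card + 1 := by gcongr; exact Finset.card_image_le

/-- Zero set on `[0, π]` of a nonzero linear form in `(cos θ, sin θ)`. -/
private noncomputable def Rset (w : ℝ × ℝ) : Set ℝ :=
  {θ | θ ∈ Set.Icc 0 π ∧ w.1 * Real.cos θ + w.2 * Real.sin θ = 0}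

private lemma Rset_key (w : ℝ × ℝ) (hw : w ≠ 0) :
    ∀ θ₁ ∈ Rset w, ∀ θ₂ ∈ Rset w, θ₁ < θ₂ → θ₁ = 0 ∧ θ₂ = π := by
  intro θ₁ ⟨⟨h10, h1p⟩, e1⟩ θ₂ ⟨⟨h20, h2p⟩, e2⟩ hlt
  have hdet : Real.cos θ₁ * Real.sin θ₂ - Real.sin θ₁ * Real.cos θ₂ = 0 := by
    by_contra hne
    have hw1 : w.1 = 0 := by
      have h : w.1 * (Real.cos θ₁ * Real.sin θ₂ - Real.sin θ₁ * Real.cos θ₂) = 0 := by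
        linear_combination Real.sin θ₂ * e1 - Real.sin θ₁ * e2
      exact (mul_eq_zero.1 h).resolve_right hne
    have hw2 : w.2 = 0 := by
      have h : w.2 * (Real.cos θ₁ * Real.sin θ₂ - Real.sin θ₁ * Real.cos θ₂) = 0 := by
        linear_combination Real.cos θ₁ * e2 - Real.cos θ₂ * e1
      exact (mul_eq_zero.1 h).resolve_right hne
    exact hw (Prod.ext hw1 hw2)
  have hsin : Real.sin (θ₂ - θ₁) = 0 := by
    rw [Real.sin_sub]; linarith [hdet]
  have h1 : 0 < θ₂ - θ₁ := by linarith
  have h2 : θ₂ - θ₁ ≤ π := by linarith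
  have : θ₂ - θ₁ = π := by
    rcases lt_or_eq_of_le h2 with hlt2 | he
    · exact absurd hsin (ne_of_gt (Real.sin_pos_of_pos_of_lt_pi h1 hlt2))
    · exact he
  constructor <;> linarith

private lemma Rset_finite (w : ℝ × ℝ) (hw : w ≠ 0) :
    (Rset w).Finite ∧ (Rset w).ncard ≤ 2 := by
  have key := Rset_key w hw
  have hsub : Rset w ⊆ {0, π} ∨ (Rset w).Subsingleton := by
    by_cases h2 : ∃ a ∈ Rset w, ∃ b ∈ Rset w, a < b
    · left
      obtain ⟨a, ha, b, hb, hab⟩ := h2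
      obtain ⟨ha0, hbp⟩ := key a ha b hb hab
      subst ha0; subst hbp
      intro z hz
      rcases eq_or_lt_of_le hz.1.1 with h' | h'
      · exact Or.inl h'.symm
      · exact Or.inr (key 0 ha z hz h').2
    · right
      intro x hx y hy
      by_contra hne
      rcases lt_or_gt_of_ne hne with h | h
      · exact h2 ⟨x, hx, y, hy, h⟩
      · exact h2 ⟨y, hy, x, hx, h⟩
  rcases hsub with h | h
  · have hpair : ({0, π} : Set ℝ).Finite := (Set.finite_singleton π).insert 0
    refine ⟨hpair.subset h, le_trans (Set.ncard_le_ncard h hpair) ?_⟩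
    exact le_trans (Set.ncard_insert_le _ _) (by simp [Set.ncard_singleton])
  · refine ⟨h.finite, le_trans ?_ one_le_two⟩
    exact (Set.ncard_le_one h.finite).2 h

private lemma ncard_biUnion_le {ι α : Type*} [DecidableEq ι] (Q : Finset ι) (f : ι → Set α) :
    (⋃ q ∈ Q, f q).ncard ≤ ∑ q ∈ Q, (f q).ncard := by
  classical
  induction Q using Finset.induction_on with
  | empty => simp
  | insert a Q' hq ih =>
    rw [Finset.set_biUnion_insert, Finset.sum_insert hq]
    exact le_trans (Set.ncard_union_le _ _) (Nat.add_le_add_left ih _)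

private lemma card_lt_pairs (n : ℕ) :
    (Finset.univ.filter (fun p : Fin n × Fin n => p.1 < p.2)).card = n.choose 2 := by
  classical
  have hch : n.choose 2 = (Finset.univ.powersetCard 2 : Finset (Finset (Fin n))).card := by
    rw [Finset.card_powersetCard, Finset.card_univ, Fintype.card_fin]
  rw [hch]
  apply Finset.card_bij (fun p _ => ({p.1, p.2} : Finset (Fin n)))
  · intro p hp
    simp only [Finset.mem_filter] at hp
    rw [Finset.mem_powersetCard]
    exact ⟨Finset.subset_univ _, by rw [Finset.card_insert_of_notMem (by simp [ne_of_lt hp.2]),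
      Finset.card_singleton]⟩
  · intro p hp q hq h
    simp only [Finset.mem_filter] at hp hq
    have h1 : p.1 ∈ ({q.1, q.2} : Finset (Fin n)) := h ▸ (by simp)
    have h2 : p.2 ∈ ({q.1, q.2} : Finset (Fin n)) := h ▸ (by simp)
    have h3 : q.1 ∈ ({p.1, p.2} : Finset (Fin n)) := h ▸ (by simp)
    simp only [Finset.mem_insert, Finset.mem_singleton] at h1 h2 h3
    have hp2 := hp.2; have hq2 := hq.2
    have : p.1 = q.1 ∧ p.2 = q.2 := by
      rcases h1 with h1 | h1 <;> rcases h2 with h2 | h2 <;> rcases h3 with h3 | h3 <;>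
        (refine ⟨?_, ?_⟩ <;> (try assumption) <;>
          (exfalso; simp only [Fin.lt_def, Fin.ext_iff] at *; omega))
    rw [Prod.ext_iff]; exact this
  · intro A hA
    rw [Finset.mem_powersetCard] at hA
    obtain ⟨a, b, hab, rfl⟩ := Finset.card_eq_two.1 hA.2
    rcases lt_or_gt_of_ne hab with h | h
    · exact ⟨(a, b), Finset.mem_filter.2 ⟨Finset.mem_univ _, h⟩, rfl⟩
    · exact ⟨(b, a), Finset.mem_filter.2 ⟨Finset.mem_univ _, h⟩, by simp [Finset.pair_comm]⟩

private lemma ang_spec (c : Fin 2 → ℝ) (hc : c 0 ^ 2 + c 1 ^ 2 = 1) :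
    ∃ θ ∈ Set.Icc 0 π, ∀ a b : ℝ,
      |a * Real.cos θ + b * Real.sin θ| = |a * c 0 + b * c 1| := by
  have hb1 : -1 ≤ c 0 := by nlinarith
  have hb2 : c 0 ≤ 1 := by nlinarith
  by_cases h : 0 ≤ c 1
  · refine ⟨Real.arccos (c 0), ⟨Real.arccos_nonneg _, Real.arccos_le_pi _⟩, ?_⟩
    have hcos : Real.cos (Real.arccos (c 0)) = c 0 := Real.cos_arccos hb1 hb2
    have hsin : Real.sin (Real.arccos (c 0)) = c 1 := by
      rw [Real.sin_arccos]
      have : 1 - c 0 ^ 2 = c 1 ^ 2 := by linarith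
      rw [this, Real.sqrt_sq h]
    intro a b; rw [hcos, hsin]
  · refine ⟨Real.arccos (-(c 0)), ⟨Real.arccos_nonneg _, Real.arccos_le_pi _⟩, ?_⟩
    have hcos : Real.cos (Real.arccos (-(c 0))) = -(c 0) :=
      Real.cos_arccos (by linarith) (by linarith)
    have hsin : Real.sin (Real.arccos (-(c 0))) = -(c 1) := by
      rw [Real.sin_arccos]
      have h1 : 1 - (-(c 0)) ^ 2 = (-(c 1)) ^ 2 := by ring_nf; linarith
      rw [h1, Real.sqrt_sq (by linarith)]
    intro a b; rw [hcos, hsin]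
    rw [show a * -c 0 + b * -c 1 = -(a * c 0 + b * c 1) by ring, abs_neg]

end SpannogramAux

/-- Rank-2 spannogram support count: for `V ∈ ℝ^{n×2}` with rows in general
position, as `c` ranges over unit vectors of `ℝ²` the number of distinct
strict top-`k` index sets `I_k(Vc)` is at most `4·C(n,2) + 2`. -/
theorem stmt_13 {n k : ℕ} (V : Matrix (Fin n) (Fin 2) ℝ)
    (hrows_ne : ∀ i : Fin n, (fun t => V i t) ≠ 0)
    (hgen : ∀ i j : Fin n, i ≠ j →
      (fun t => V i t) ≠ (fun t => V j t) ∧ (fun t => V i t) ≠ (fun t => -V j t)) :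
    {I : Finset (Fin n) | ∃ c : Fin 2 → ℝ, (∑ t, c t ^ 2 = 1) ∧
        I.card = k ∧
        (∀ a ∈ I, ∀ b ∉ I, |V.mulVec c b| < |V.mulVec c a|)}.ncard
      ≤ 4 * n.choose 2 + 2 := by
  classical
  set S : Set (Finset (Fin n)) := {I : Finset (Fin n) | ∃ c : Fin 2 → ℝ, (∑ t, c t ^ 2 = 1) ∧
        I.card = k ∧
        (∀ a ∈ I, ∀ b ∉ I, |V.mulVec c b| < |V.mulVec c a|)} with hSdef
  by_cases hS : S.Finite
  swap
  · rw [Set.Infinite.ncard hS]; omega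
  -- the absolute-value functions along the half circle
  set F : Fin n → ℝ → ℝ := fun i θ => |V i 0 * Real.cos θ + V i 1 * Real.sin θ| with hFdef
  have Fcont : ∀ i, Continuous (F i) := by
    intro i
    exact continuous_abs.comp (by continuity)
  -- each achievable support set has an angle representative in [0, π]
  have hrep : ∀ I ∈ S, ∃ θ ∈ Set.Icc 0 Real.pi,
      ∀ a ∈ I, ∀ b ∉ I, F b θ < F a θ := by
    intro I hI
    obtain ⟨c, hc, _, hsupp⟩ := hI
    have hc' : c 0 ^ 2 + c 1 ^ 2 = 1 := by
      rw [← hc, Fin.sum_univ_two]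
    obtain ⟨θ, hθmem, hθ⟩ := ang_spec c hc'
    refine ⟨θ, hθmem, ?_⟩
    have hmv : ∀ i, F i θ = |V.mulVec c i| := by
      intro i
      rw [hFdef]
      simp only [Matrix.mulVec, dotProduct, Fin.sum_univ_two]
      exact hθ (V i 0) (V i 1)
    intro a ha b hb
    rw [hmv a, hmv b]
    exact hsupp a ha b hb
  choose! g hg1 hg2 using hrep
  -- the crossing set
  set P : Finset ((Fin n × Fin n) × Bool) :=
    (Finset.univ.filter (fun p : Fin n × Fin n => p.1 < p.2)) ×ˢ Finset.univ with hPdef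
  set w : (Fin n × Fin n) × Bool → ℝ × ℝ := fun q =>
    if q.2 then (V q.1.1 0 - V q.1.2 0, V q.1.1 1 - V q.1.2 1)
    else (V q.1.1 0 + V q.1.2 0, V q.1.1 1 + V q.1.2 1) with hwdef
  have hw1 : ∀ i j : Fin n, w ((i, j), true) = (V i 0 - V j 0, V i 1 - V j 1) := by
    intro i j; simp [hwdef]
  have hw0 : ∀ i j : Fin n, w ((i, j), false) = (V i 0 + V j 0, V i 1 + V j 1) := by
    intro i j; simp [hwdef]
  have hwne : ∀ q ∈ P, w q ≠ 0 := by
    rintro ⟨⟨i, j⟩, s⟩ hq h0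
    have hij : i < j := (Finset.mem_filter.1 (Finset.mem_product.1 hq).1).2
    have hne := hgen i j (ne_of_lt hij)
    cases s with
    | true =>
      rw [hw1, Prod.mk_eq_zero] at h0
      refine hne.1 (funext fun t => ?_)
      fin_cases t
      · show V i 0 = V j 0; linarith [h0.1]
      · show V i 1 = V j 1; linarith [h0.2]
    | false =>
      rw [hw0, Prod.mk_eq_zero] at h0
      refine hne.2 (funext fun t => ?_)
      fin_cases t
      · show V i 0 = -(V j 0); linarith [h0.1]
      · show V i 1 = -(V j 1); linarith [h0.2]
  set Z : Set ℝ := ⋃ q ∈ P, Rset (w q) with hZdef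
  have hZfin : Z.Finite :=
    Set.Finite.biUnion P.finite_toSet (fun q hq => (Rset_finite (w q) (hwne q hq)).1)
  have hZcard : Z.ncard ≤ 4 * n.choose 2 := by
    calc Z.ncard ≤ ∑ q ∈ P, (Rset (w q)).ncard := ncard_biUnion_le P _
      _ ≤ ∑ _q ∈ P, 2 := Finset.sum_le_sum (fun q hq => (Rset_finite (w q) (hwne q hq)).2)
      _ = P.card * 2 := by rw [Finset.sum_const, smul_eq_mul]
      _ = 4 * n.choose 2 := by
          rw [hPdef, Finset.card_product, card_lt_pairs]
          simp [Fintype.card_bool]; ring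
  -- crossing membership
  have hmemZ : ∀ (i j : Fin n) (sg : Bool), i < j → ∀ θ ∈ Set.Icc 0 Real.pi,
      (w ((i, j), sg)).1 * Real.cos θ + (w ((i, j), sg)).2 * Real.sin θ = 0 → θ ∈ Z := by
    intro i j sg hij θ hθ he
    refine Set.mem_iUnion₂.2 ⟨((i, j), sg), ?_, ?_⟩
    · exact Finset.mem_product.2 ⟨Finset.mem_filter.2 ⟨Finset.mem_univ _, hij⟩,
        Finset.mem_univ _⟩
    · simp only [Rset, Set.mem_setOf_eq]
      exact ⟨hθ, he⟩
  have hcross : ∀ θ ∈ Set.Icc 0 Real.pi, ∀ i j : Fin n, i ≠ j → F i θ = F j θ → θ ∈ Z := by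
    intro θ hθ i j hij heq
    rw [hFdef] at heq
    simp only at heq
    rcases abs_eq_abs.1 heq with h | h
    · rcases lt_or_gt_of_ne hij with hlt | hlt
      · exact hmemZ i j true hlt θ hθ (by rw [hw1]; simp only; linear_combination h)
      · exact hmemZ j i true hlt θ hθ (by rw [hw1]; simp only; linear_combination -h)
    · rcases lt_or_gt_of_ne hij with hlt | hlt
      · exact hmemZ i j false hlt θ hθ (by rw [hw0]; simp only; linear_combination h)
      · exact hmemZ j i false hlt θ hθ (by rw [hw0]; simp only; linear_combination h)
  -- helper: distinct supports in S have elements in differences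
  have hdiff : ∀ I₁ ∈ S, ∀ I₂ ∈ S, I₁ ≠ I₂ →
      ∃ a ∈ I₁, a ∉ I₂ := by
    intro I₁ hI₁ I₂ hI₂ hne
    obtain ⟨_, _, hk1, _⟩ := hI₁
    obtain ⟨_, _, hk2, _⟩ := hI₂
    by_contra hno
    push_neg at hno
    exact hne (Finset.eq_of_subset_of_card_le hno (by rw [hk1, hk2]))
  -- injectivity of the representative map on S
  have hinj : Set.InjOn g S := by
    intro I₁ hI₁ I₂ hI₂ heq
    by_contra hne
    obtain ⟨a, ha1, ha2⟩ := hdiff I₁ hI₁ I₂ hI₂ hne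
    obtain ⟨b, hb2, hb1⟩ := hdiff I₂ hI₂ I₁ hI₁ (Ne.symm hne)
    have h1 := hg2 I₁ hI₁ a ha1 b hb1
    have h2 := hg2 I₂ hI₂ b hb2 a ha2
    rw [heq] at h1
    linarith
  -- between any two representatives there is a crossing
  have hbet : ∀ I₁ ∈ S, ∀ I₂ ∈ S, g I₁ < g I₂ → ∃ z ∈ Z, g I₁ < z ∧ z < g I₂ := by
    intro I₁ hI₁ I₂ hI₂ hlt
    have hne : I₁ ≠ I₂ := fun h => by rw [h] at hlt; exact lt_irrefl _ hlt
    obtain ⟨a, ha1, ha2⟩ := hdiff I₁ hI₁ I₂ hI₂ hne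
    obtain ⟨b, hb2, hb1⟩ := hdiff I₂ hI₂ I₁ hI₁ (Ne.symm hne)
    have hab : a ≠ b := fun h => ha2 (h ▸ hb2)
    have h1 : F b (g I₁) < F a (g I₁) := hg2 I₁ hI₁ a ha1 b hb1
    have h2 : F a (g I₂) < F b (g I₂) := hg2 I₂ hI₂ b hb2 a ha2
    have hcont : ContinuousOn (fun θ => F a θ - F b θ) (Set.Icc (g I₁) (g I₂)) :=
      ((Fcont a).sub (Fcont b)).continuousOn
    have h0 : (0 : ℝ) ∈ Set.Ioo ((fun θ => F a θ - F b θ) (g I₂))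
        ((fun θ => F a θ - F b θ) (g I₁)) := ⟨by simpa using h2, by simpa using h1⟩
    obtain ⟨z, hz, hz0⟩ := intermediate_value_Ioo' (le_of_lt hlt) hcont h0
    refine ⟨z, ?_, hz.1, hz.2⟩
    have hzIcc : z ∈ Set.Icc 0 Real.pi :=
      ⟨le_trans (hg1 I₁ hI₁).1 (le_of_lt hz.1), le_trans (le_of_lt hz.2) (hg1 I₂ hI₂).2⟩
    exact hcross z hzIcc a b hab (by simpa [sub_eq_zero] using hz0)
  -- assemble the count
  set sf : Finset (Finset (Fin n)) := hS.toFinset with hsfdef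
  set tf : Finset ℝ := sf.image g with htfdef
  set zf : Finset ℝ := hZfin.toFinset with hzfdef
  have hmem : ∀ I, I ∈ sf ↔ I ∈ S := fun I => hS.mem_toFinset
  have hcard1 : S.ncard = sf.card := Set.ncard_eq_toFinset_card S hS
  have hcard2 : tf.card = sf.card := by
    rw [htfdef]
    apply Finset.card_image_of_injOn
    intro x hx y hy
    exact hinj ((hmem x).1 hx) ((hmem y).1 hy)
  have hzcard : zf.card = Z.ncard := (Set.ncard_eq_toFinset_card Z hZfin).symm
  have hb : tf.card ≤ zf.card + 1 := by
    apply count_between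
    intro x hx y hy hxy
    obtain ⟨I₁, hI₁, rfl⟩ := Finset.mem_image.1 hx
    obtain ⟨I₂, hI₂, rfl⟩ := Finset.mem_image.1 hy
    obtain ⟨z, hzZ, hz1, hz2⟩ := hbet I₁ ((hmem I₁).1 hI₁) I₂ ((hmem I₂).1 hI₂) hxy
    exact ⟨z, hZfin.mem_toFinset.2 hzZ, hz1, hz2⟩
  calc S.ncard = tf.card := by rw [hcard1, hcard2]
    _ ≤ zf.card + 1 := hb
    _ ≤ 4 * n.choose 2 + 1 := by rw [hzcard]; omega
    _ ≤ 4 * n.choose 2 + 2 := by omega
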